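/- Fix 1 ≤ k ≤ n and a sign γ, and set σ = u_{k−1}⊗∂^γu_1⊗u_{n−k}. Then there is a chain map f : I^n → I^n given, for x a chain in I^{k−1} and y a chain in I^{n−k}, by f(x⊗u_1⊗y) = 0 and f(x⊗∂^γu_1⊗y) = f(x⊗∂^{−γ}u_1⊗y) = x⊗∂^γu_1⊗y, and this chain map satisfies f⟨u_n⟩_i^α = ⟨σ⟩_i^α for all i and α. -/

import Mathlib

namespace CubicalNerve

/-- Signs: `true` is `+`, `false` is `−`, as an integer `±1`. -/
def sgn (α : Bool) : ℤ := if α then 1 else -1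

/-- Sign twisting: `twist α m` is the sign `(−1)^m α`. -/
def twist (α : Bool) (m : ℕ) : Bool := if Even m then α else !α

/-- A standard basis element of the chain complex `Iⁿ`: the factor at position `i` is
`u₁` when the value is `none`, and `∂^α u₁` when the value is `some α`. -/
abbrev Cell (n : ℕ) := Fin n → Option Bool

/-- The dimension of a standard basis element: the number of `u₁` factors. -/
def Cell.dim {n : ℕ} (σ : Cell n) : ℕ := (Finset.univ.filter fun i => σ i = none).card

/-- The number of `u₁` factors strictly before position `i`. -/
def Cell.below {n : ℕ} (σ : Cell n) (i : Fin n) : ℕ :=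
  (Finset.univ.filter fun j => j < i ∧ σ j = none).card

/-- The number of `∂^± u₁` factors at positions `≤ j`. -/
def Cell.sLe {n : ℕ} (σ : Cell n) (j : Fin n) : ℕ :=
  (Finset.univ.filter fun i => i ≤ j ∧ σ i ≠ none).card

/-- The chain groups of `Iⁿ` (all degrees taken together): the free abelian group
on the standard basis elements. -/
abbrev Chain (n : ℕ) := Cell n →₀ ℤ

/-- The boundary of a standard basis element (tensor-product boundary formula). -/
noncomputable def bdCell {n : ℕ} (σ : Cell n) : Chain n :=
  ∑ i ∈ Finset.univ.filter (fun i => σ i = none),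
    ((-1 : ℤ) ^ σ.below i) •
      (Finsupp.single (Function.update σ i (some true)) 1 -
        Finsupp.single (Function.update σ i (some false)) 1)

/-- The boundary operator of `Iⁿ`. -/
noncomputable def bd {n : ℕ} (c : Chain n) : Chain n := c.sum fun σ z => z • bdCell σ

/-- The positive part of a chain. -/
noncomputable def posPart {n : ℕ} (c : Chain n) : Chain n :=
  Finsupp.mapRange (fun z => max z 0) (by simp) c

/-- The negative part of a chain. -/
noncomputable def negPart {n : ℕ} (c : Chain n) : Chain n :=
  Finsupp.mapRange (fun z => max (-z) 0) (by simp) c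

/-- `∂^α`: the positive (resp. negative) part of the boundary. -/
noncomputable def bdp {n : ℕ} (α : Bool) (c : Chain n) : Chain n :=
  if α then posPart (bd c) else negPart (bd c)

/-- The atom `⟨σ⟩`: `atom σ α q` is the chain `⟨σ⟩_q^α = (∂^α)^{p−q} σ` for `q ≤ p = dim σ`,
and `0` for `q > p`. -/
noncomputable def atom {n : ℕ} (σ : Cell n) (α : Bool) (q : ℕ) : Chain n :=
  if q ≤ σ.dim then (bdp α)^[σ.dim - q] (Finsupp.single σ 1) else 0

/-- The augmentation (extended by zero on positive-degree chains). -/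
noncomputable def aug {n : ℕ} (c : Chain n) : ℤ := c.sum fun σ z => if σ.dim = 0 then z else 0

/-- The top basis element `u_n = u₁ ⊗ ⋯ ⊗ u₁` of `Iⁿ`. -/
def un (n : ℕ) : Cell n := fun _ => none

/-- The basis element `u_{k-1} ⊗ ∂^γ u₁ ⊗ u_{n-k}` (here `k : Fin n` is `k−1` in the
1-indexed notation of the paper). -/
def kcell {n : ℕ} (k : Fin n) (γ : Bool) : Cell n := Function.update (un n) k (some γ)

/-- Membership in `ν Iⁿ` for a double sequence `x`, where `x i α` is `x_i^α`:
each `x_i^α` is an `i`-chain which is a nonnegative sum of standard basis elements,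
`ε x_0^- = ε x_0^+ = 1`, and `x_i^+ − x_i^− = ∂ x_{i+1}^- = ∂ x_{i+1}^+`. -/
def IsNu {n : ℕ} (x : ℕ → Bool → Chain n) : Prop :=
  (∀ i α, ∀ σ ∈ (x i α).support, Cell.dim σ = i) ∧
  (∀ i α, 0 ≤ x i α) ∧
  (∀ α, aug (x 0 α) = 1) ∧
  (∀ i α, x i true - x i false = bd (x (i + 1) α))

/-- The double sequence of an atom. -/
noncomputable def atomSeq {n : ℕ} (σ : Cell n) : ℕ → Bool → Chain n := fun i α => atom σ α i

/-- The identity operation `d_p^α` on double sequences. -/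
noncomputable def dOp {n : ℕ} (p : ℕ) (α : Bool) (x : ℕ → Bool → Chain n) : ℕ → Bool → Chain n :=
  fun i β => if i < p then x i β else if i = p then x p α else 0

/-- The composition `x #_p y = x − d_p⁺ x + y`, formed termwise. -/
noncomputable def comp {n : ℕ} (p : ℕ) (x y : ℕ → Bool → Chain n) : ℕ → Bool → Chain n :=
  fun i β => x i β - dOp p true x i β + y i β

/-- Insertion of a new tensor factor at (0-indexed) position `i` (clamped into range). -/
def insertCell {m : ℕ} (i : ℕ) (v : Option Bool) (σ : Cell m) : Cell (m + 1) :=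
  Fin.insertNth ⟨min i m, Nat.lt_succ_of_le (min_le_right i m)⟩ v σ

/-- The face chain map `∂̌_i^α : Iᵐ → Iᵐ⁺¹` (with `i` 1-indexed, `1 ≤ i ≤ m+1`),
given on standard basis elements by `x ⊗ y ↦ x ⊗ ∂^α u₁ ⊗ y`. -/
noncomputable def faceL (m : ℕ) (i : ℕ) (α : Bool) : Chain m →ₗ[ℤ] Chain (m + 1) :=
  Finsupp.lmapDomain ℤ ℤ (insertCell (i - 1) (some α))

/-- `IsFaceComposite F` means that `F` is a composite of face chain maps `∂̌_i^α`. -/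
inductive IsFaceComposite : ∀ {m n : ℕ}, (Chain m →ₗ[ℤ] Chain n) → Prop
  | id (m : ℕ) : IsFaceComposite (LinearMap.id : Chain m →ₗ[ℤ] Chain m)
  | step {m d : ℕ} {F : Chain m →ₗ[ℤ] Chain d} (i : ℕ) (α : Bool)
      (h1 : 1 ≤ i) (h2 : i ≤ d + 1) :
      IsFaceComposite F → IsFaceComposite ((faceL d i α).comp F)

/-- `stdC m p ι a` is the composite `∂̌_{ι 0}^{a 0} ∘ ⋯ ∘ ∂̌_{ι (p-1)}^{a (p-1)} : Iᵐ → Iᵐ⁺ᵖ`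
(so `∂̌_{ι (p-1)}^{a (p-1)}` is applied first). -/
noncomputable def stdC (m : ℕ) :
    (p : ℕ) → (Fin p → ℕ) → (Fin p → Bool) → (Chain m →ₗ[ℤ] Chain (m + p))
  | 0, _, _ => LinearMap.id
  | p + 1, ι, a =>
      (faceL (m + p) (ι 0) (a 0)).comp (stdC m p (fun r => ι r.succ) (fun r => a r.succ))

/-- Transport of chains along an equality of dimensions. -/
noncomputable def chainCongr {a b : ℕ} (h : a = b) : Chain a ≃ₗ[ℤ] Chain b :=
  Finsupp.domLCongr (Equiv.arrowCongr (finCongr h) (Equiv.refl (Option Bool)))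

/-- The basis element of `I¹` with value `v`. -/
def cellOf (v : Option Bool) : Cell 1 := fun _ => v

/-- The `n`-fold tensor product of chains of `I¹`, as a chain of `Iⁿ`. -/
noncomputable def tens {n : ℕ} (c : Fin n → Chain 1) : Chain n :=
  Finsupp.equivFunOnFinite.symm fun σ => ∏ j, (c j) (cellOf (σ j))

/-- `τ` has an "extreme" standard decomposition of constant sign `ε`: for its `r`-th
factor `∂_{i}^{α}` (`r`, `i` 1-indexed), `(−1)^{i−r} α = ε`. -/
def ExtremeSign {n : ℕ} (τ : Cell n) (ε : ℤ) : Prop :=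
  ∀ (j : Fin n) (α : Bool), τ j = some α →
    (-1 : ℤ) ^ ((j : ℕ) + 1 + τ.sLe j) * sgn α = ε

/-- The basis element `τ` corresponds to a precubical operation complementary to
`∂_{k+1}^γ` (with `k : Fin n`, i.e. `k+1` in the paper's 1-indexing): its standard
decomposition has no factor at position `k`, and inserting `∂_{k+1}^{−γ}` produces
a standard decomposition of constant sign. -/
def CellCompl {n : ℕ} (k : Fin n) (γ : Bool) (τ : Cell n) : Prop :=
  τ k = none ∧ ∃ ε : ℤ, ExtremeSign (Function.update τ k (some (!γ))) ε

/-- The chain homotopy `D` associated to the face `∂_{k+1}^γ` (0-indexed `k : Fin n`). -/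
noncomputable def Dfun {n : ℕ} (k : Fin n) (γ : Bool) (c : Chain n) : Chain n :=
  c.sum fun τ z =>
    if τ k = some (!γ) then
      (z * (-((-1 : ℤ) ^ Cell.below τ k * sgn γ))) •
        Finsupp.single (Function.update τ k (none : Option Bool)) 1
    else 0

/-- The double sequence `A_q^β` of Proposition 6.4. -/
noncomputable def Aseq {n : ℕ} (k : Fin n) (γ : Bool) (q : ℕ) (β : Bool) :
    ℕ → Bool → Chain n :=
  fun i α =>
    if i + 1 < q then atom (un n) α i
    else if i + 1 = q then
      (if α = β then atom (un n) β i
       else atom (un n) β i - bd (Dfun k γ (atom (un n) β i)))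
    else if i = q then sgn β • Dfun k γ (atom (un n) β (q - 1))
    else 0

/-- The elements `A_q` of Proposition 6.5, defined inductively from the `A_q^β` by
`A_0 = ⟨σ⟩` and `A_q = A_q^− #_{q−1} A_{q−1} #_{q−1} A_q^+`. -/
noncomputable def Aq {n : ℕ} (k : Fin n) (γ : Bool) : ℕ → (ℕ → Bool → Chain n)
  | 0 => atomSeq (kcell k γ)
  | q + 1 => comp q (comp q (Aseq k γ (q + 1) false) (Aq k γ q)) (Aseq k γ (q + 1) true)


/-! ### Auxiliary development -/

section Aux

variable {n : ℕ}

lemma sgn_not (α : Bool) : sgn (!α) = -sgn α := by cases α <;> simp [sgn]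

lemma twist_succ (α : Bool) (m : ℕ) : twist α (m + 1) = !(twist α m) := by
  by_cases h : Even m <;> simp [twist, Nat.even_add_one, h]

lemma twist_not (α : Bool) (m : ℕ) : twist (!α) m = !(twist α m) := by
  by_cases h : Even m <;> simp [twist, h]

lemma sgn_twist (α : Bool) (m : ℕ) : sgn (twist α m) = (-1) ^ m * sgn α := by
  induction m with
  | zero => simp [twist]
  | succ m ih => rw [twist_succ, sgn_not, ih, pow_succ]; ring

lemma below_congr {σ σ' : Cell n} {i : Fin n}
    (h : ∀ j, j < i → (σ j = none ↔ σ' j = none)) : σ.below i = σ'.below i := by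
  unfold Cell.below
  congr 1
  apply Finset.filter_congr
  intro j _
  constructor
  · rintro ⟨hj, hv⟩; exact ⟨hj, (h j hj).1 hv⟩
  · rintro ⟨hj, hv⟩; exact ⟨hj, (h j hj).2 hv⟩

lemma below_update_of_le {σ : Cell n} {i j : Fin n} (v : Option Bool) (h : j ≤ i) :
    Cell.below (Function.update σ i v) j = σ.below j := by
  apply below_congr
  intro j' hj'
  rw [Function.update_of_ne (ne_of_lt (lt_of_lt_of_le hj' h))]

lemma below_update_none_of_gt {τ : Cell n} {i j : Fin n} (hτ : τ i ≠ none) (hij : i < j) :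
    Cell.below (Function.update τ i none) j = τ.below j + 1 := by
  unfold Cell.below
  have : (Finset.univ.filter fun j' => j' < j ∧ Function.update τ i none j' = none)
      = insert i (Finset.univ.filter fun j' => j' < j ∧ τ j' = none) := by
    ext j'
    by_cases hj' : j' = i
    · subst hj'; simp [hij]
    · simp [Function.update_of_ne hj', hj']
  rw [this, Finset.card_insert_of_notMem (by simp [hτ])]

lemma dim_update_none {τ : Cell n} {i : Fin n} (h : τ i ≠ none) :
    Cell.dim (Function.update τ i none) = τ.dim + 1 := by
  unfold Cell.dim
  have : (Finset.univ.filter fun j => Function.update τ i none j = none)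
      = insert i (Finset.univ.filter fun j => τ j = none) := by
    ext j
    by_cases hj : j = i
    · subst hj; simp
    · simp [Function.update_of_ne hj, hj]
  rw [this, Finset.card_insert_of_notMem (by simp [h])]

lemma nones_update_some {τ : Cell n} {k : Fin n} (h : τ k ≠ none) (γ : Bool) :
    (Finset.univ.filter fun j => Function.update τ k (some γ) j = none)
      = Finset.univ.filter fun j => τ j = none := by
  ext j
  by_cases hj : j = k
  · subst hj; simp [h]
  · simp [Function.update_of_ne hj]

lemma dim_update_some {τ : Cell n} {k : Fin n} (h : τ k ≠ none) (γ : Bool) :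
    Cell.dim (Function.update τ k (some γ)) = τ.dim := by
  unfold Cell.dim; rw [nones_update_some h]

lemma below_update_some {τ : Cell n} {k : Fin n} (h : τ k ≠ none) (γ : Bool) (i : Fin n) :
    Cell.below (Function.update τ k (some γ)) i = τ.below i := by
  apply below_congr
  intro j _
  by_cases hj : j = k
  · subst hj; simp [h]
  · rw [Function.update_of_ne hj]

/-- The "extreme cell" predicate: `σ` refines `ρ`, with new `some` entries given by
the twist rule. -/
def Ext (ρ : Cell n) (α : Bool) (σ : Cell n) : Prop :=
  (∀ j : Fin n, ρ j ≠ none → σ j = ρ j) ∧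
  ∀ (j : Fin n) (β : Bool), ρ j = none → σ j = some β → β = twist α (σ.below j)

instance (ρ : Cell n) (α : Bool) (σ : Cell n) : Decidable (Ext ρ α σ) := by
  unfold Ext; infer_instance

/-- The set of extreme cells of dimension `q`. -/
def ES (ρ : Cell n) (α : Bool) (q : ℕ) : Finset (Cell n) :=
  Finset.univ.filter fun σ => Ext ρ α σ ∧ σ.dim = q

/-- The chain given by the sum of all extreme cells of dimension `q`. -/
noncomputable def S (ρ : Cell n) (α : Bool) (q : ℕ) : Chain n :=
  ∑ σ ∈ ES ρ α q, Finsupp.single σ 1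

lemma sum_single_apply (s : Finset (Cell n)) (τ : Cell n) :
    (∑ σ ∈ s, Finsupp.single σ (1 : ℤ)) τ = if τ ∈ s then 1 else 0 := by
  rw [Finset.sum_apply']
  simp only [Finsupp.single_apply]
  rw [Finset.sum_ite_eq' s τ (fun _ => (1 : ℤ))]

lemma S_apply (ρ : Cell n) (α : Bool) (q : ℕ) (τ : Cell n) :
    (S ρ α q) τ = if τ ∈ ES ρ α q then 1 else 0 := sum_single_apply _ _

end Aux

section Aux2

variable {n : ℕ}

/-- `bd` as a linear map. -/
noncomputable def bdL : Chain n →ₗ[ℤ] Chain n :=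
  Finsupp.lsum ℤ fun σ => LinearMap.toSpanSingleton ℤ (Chain n) (bdCell σ)

lemma bd_eq (c : Chain n) : bd c = bdL c := by
  rw [bdL, Finsupp.lsum_apply]; rfl

lemma bd_single (σ : Cell n) (z : ℤ) : bd (Finsupp.single σ z) = z • bdCell σ := by
  rw [bd_eq, bdL, Finsupp.lsum_single]; rfl

lemma bd_zero : bd (0 : Chain n) = 0 := by rw [bd_eq, map_zero]

lemma bd_add (c c' : Chain n) : bd (c + c') = bd c + bd c' := by
  rw [bd_eq, bd_eq, bd_eq, map_add]

lemma bd_smul (z : ℤ) (c : Chain n) : bd (z • c) = z • bd c := by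
  rw [bd_eq, bd_eq, map_smul]

lemma bd_sum_single (s : Finset (Cell n)) :
    bd (∑ σ ∈ s, Finsupp.single σ (1 : ℤ)) = ∑ σ ∈ s, bdCell σ := by
  rw [bd_eq, map_sum]
  apply Finset.sum_congr rfl
  intro σ _
  rw [bdL, Finsupp.lsum_single, LinearMap.toSpanSingleton_apply, one_smul]

lemma bdCell_eq (σ : Cell n) :
    bdCell σ = ∑ i ∈ Finset.univ.filter (fun i => σ i = none), ∑ β : Bool,
      (((-1 : ℤ) ^ σ.below i * sgn β) • Finsupp.single (Function.update σ i (some β)) 1) := by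
  unfold bdCell
  apply Finset.sum_congr rfl
  intro i _
  rw [Fintype.sum_bool]
  rw [show sgn true = 1 from rfl, show sgn false = -1 from rfl, mul_one, mul_neg_one,
    neg_smul, smul_sub, sub_eq_add_neg]

/-- The core combinatorial cancellation lemma. -/
lemma core {ι : Type*} [LinearOrder ι] (J : Finset ι) (hJ : J.Nonempty) (g : ι → Bool) :
    ∑ i ∈ J.filter (fun i => (∀ j ∈ J, j < i → g j = true) ∧ (∀ j ∈ J, i < j → g j = false)),
        (if g i then (1 : ℤ) else -1)
      = (if ∀ j ∈ J, g j = true then 1 else 0) - (if ∀ j ∈ J, g j = false then 1 else 0) := by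
  by_cases hg : ∀ j ∈ J, g j = true
  · have hne : ¬ ∀ j ∈ J, g j = false := by
      intro h
      obtain ⟨j, hj⟩ := hJ
      have := hg j hj; have := h j hj; simp_all
    have hfil : J.filter (fun i => (∀ j ∈ J, j < i → g j = true) ∧ (∀ j ∈ J, i < j → g j = false))
        = {J.max' hJ} := by
      ext i
      simp only [Finset.mem_filter, Finset.mem_singleton]
      constructor
      · rintro ⟨hi, -, h2⟩
        have hle : i ≤ J.max' hJ := Finset.le_max' J i hi
        rcases eq_or_lt_of_le hle with h | h
        · exact h
        · exact absurd (hg _ (J.max'_mem hJ)) (by simp [h2 _ (J.max'_mem hJ) h])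
      · rintro rfl
        refine ⟨J.max'_mem hJ, fun j hj _ => hg j hj, fun j hj hlt => ?_⟩
        exact absurd (Finset.le_max' J j hj) (not_le.mpr hlt)
    rw [hfil, Finset.sum_singleton, if_pos (hg _ (J.max'_mem hJ)), if_pos hg, if_neg hne]
    norm_num
  · by_cases hb : ∀ j ∈ J, g j = false
    · have hfil : J.filter
          (fun i => (∀ j ∈ J, j < i → g j = true) ∧ (∀ j ∈ J, i < j → g j = false))
          = {J.min' hJ} := by
        ext i
        simp only [Finset.mem_filter, Finset.mem_singleton]
        constructor
        · rintro ⟨hi, h1, -⟩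
          have hle : J.min' hJ ≤ i := Finset.min'_le J i hi
          rcases eq_or_lt_of_le hle with h | h
          · exact h.symm
          · exact absurd (hb _ (J.min'_mem hJ)) (by simp [h1 _ (J.min'_mem hJ) h])
        · rintro rfl
          refine ⟨J.min'_mem hJ, fun j hj hlt => ?_, fun j hj _ => hb j hj⟩
          exact absurd (Finset.min'_le J j hj) (not_le.mpr hlt)
      rw [hfil, Finset.sum_singleton, if_neg (by simp [hb _ (J.min'_mem hJ)]),
        if_neg hg, if_pos hb]
      norm_num
    · -- mixed case
      push_neg at hg hb
      have hG : (J.filter fun j => g j = true).Nonempty := by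
        obtain ⟨j, hj, hgj⟩ := hb
        exact ⟨j, Finset.mem_filter.mpr ⟨hj, by simpa using hgj⟩⟩
      have hB : (J.filter fun j => g j = false).Nonempty := by
        obtain ⟨j, hj, hgj⟩ := hg
        exact ⟨j, Finset.mem_filter.mpr ⟨hj, by simpa using hgj⟩⟩
      set a := (J.filter fun j => g j = true).max' hG with ha
      set b := (J.filter fun j => g j = false).min' hB with hbdef
      have haJ : a ∈ J ∧ g a = true := by
        have := (J.filter fun j => g j = true).max'_mem hG
        simpa using Finset.mem_filter.mp this
      have hbJ : b ∈ J ∧ g b = false := by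
        have := (J.filter fun j => g j = false).min'_mem hB
        simpa using Finset.mem_filter.mp this
      have hab : a ≠ b := fun h => by rw [h] at haJ; simp [haJ.2] at hbJ
      have hga : ∀ j ∈ J, g j = true → j ≤ a :=
        fun j hj hgj => Finset.le_max' _ j (Finset.mem_filter.mpr ⟨hj, hgj⟩)
      have hgb : ∀ j ∈ J, g j = false → b ≤ j :=
        fun j hj hgj => Finset.min'_le _ j (Finset.mem_filter.mpr ⟨hj, hgj⟩)
      rw [if_neg (fun h => by simp [h b hbJ.1] at hbJ), if_neg (fun h => by
        have := h a haJ.1; simp [haJ.2] at this), sub_zero]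
      by_cases hltab : a < b
      · have hfil : J.filter
            (fun i => (∀ j ∈ J, j < i → g j = true) ∧ (∀ j ∈ J, i < j → g j = false))
            = {a, b} := by
          ext i
          simp only [Finset.mem_filter, Finset.mem_insert, Finset.mem_singleton]
          constructor
          · rintro ⟨hi, h1, h2⟩
            rcases (Bool.eq_false_or_eq_true (g i)).symm with hgi | hgi
            · right
              rcases eq_or_lt_of_le (hgb i hi hgi) with h | h
              · exact h.symm
              · exact absurd (h1 b hbJ.1 h) (by simp [hbJ.2])
            · left
              rcases eq_or_lt_of_le (hga i hi hgi) with h | h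
              · exact h
              · exact absurd (h2 a haJ.1 h) (by simp [haJ.2])
          · rintro (rfl | rfl)
            · refine ⟨haJ.1, fun j hj hji => ?_, fun j hj hij => ?_⟩
              · rcases (Bool.eq_false_or_eq_true (g j)).symm with hgj | hgj
                · exact absurd (hgb j hj hgj) (not_le.mpr (lt_trans hji hltab))
                · exact hgj
              · rcases (Bool.eq_false_or_eq_true (g j)).symm with hgj | hgj
                · exact hgj
                · exact absurd (hga j hj hgj) (not_le.mpr hij)
            · refine ⟨hbJ.1, fun j hj hji => ?_, fun j hj hij => ?_⟩
              · rcases (Bool.eq_false_or_eq_true (g j)).symm with hgj | hgj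
                · exact absurd (hgb j hj hgj) (not_le.mpr hji)
                · exact hgj
              · rcases (Bool.eq_false_or_eq_true (g j)).symm with hgj | hgj
                · exact hgj
                · exact absurd (hga j hj hgj) (not_le.mpr (lt_trans hltab hij))
        rw [hfil, Finset.sum_pair hab, if_pos haJ.2, if_neg (by simp [hbJ.2])]
        norm_num
      · have hba : b < a := lt_of_le_of_ne (not_lt.mp hltab) (Ne.symm hab)
        have hfil : J.filter
            (fun i => (∀ j ∈ J, j < i → g j = true) ∧ (∀ j ∈ J, i < j → g j = false))
            = ∅ := by
          rw [Finset.filter_eq_empty_iff]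
          rintro i hi ⟨h1, h2⟩
          rcases lt_trichotomy i a with h | h | h
          · exact absurd (h2 a haJ.1 h) (by simp [haJ.2])
          · subst h
            exact absurd (h1 b hbJ.1 hba) (by simp [hbJ.2])
          · exact absurd (h1 b hbJ.1 (lt_trans hba h)) (by simp [hbJ.2])
        rw [hfil, Finset.sum_empty]

end Aux2

section Aux3

variable {n : ℕ}

/-- Sign of an optional boolean (0 for `none`). -/
def sg (o : Option Bool) : ℤ := o.elim 0 sgn

lemma mem_ES {ρ : Cell n} {α : Bool} {q : ℕ} {σ : Cell n} :
    σ ∈ ES ρ α q ↔ Ext ρ α σ ∧ σ.dim = q := by simp [ES]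

lemma smul_single_apply (c : ℤ) (a τ : Cell n) :
    (c • Finsupp.single a (1 : ℤ)) τ = if a = τ then c else 0 := by
  rw [Finsupp.smul_apply, Finsupp.single_apply]
  split <;> simp

lemma bdCell_apply (σ τ : Cell n) :
    bdCell σ τ = ∑ i : Fin n, (if σ i = none then
      ∑ β : Bool, (if Function.update σ i (some β) = τ
        then ((-1 : ℤ) ^ σ.below i * sgn β) else 0) else 0) := by
  conv_lhs => rw [bdCell_eq]
  rw [Finset.sum_apply', Finset.sum_filter]
  apply Finset.sum_congr rfl
  intro i _
  by_cases hi : σ i = none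
  · rw [if_pos hi, if_pos hi, Finset.sum_apply']
    exact Finset.sum_congr rfl fun β _ => smul_single_apply ..
  · rw [if_neg hi, if_neg hi]

lemma eq_update_of_update_eq {σ τ : Cell n} {i : Fin n} {β : Bool}
    (hσ : σ i = none) (h : Function.update σ i (some β) = τ) :
    σ = Function.update τ i none ∧ τ i = some β := by
  subst h
  constructor
  · funext j
    by_cases hj : j = i
    · subst hj; simp [hσ]
    · simp [Function.update_of_ne hj]
  · simp

lemma inner2 (s : Finset (Cell n)) (τ : Cell n) (i : Fin n) :
    ∑ σ ∈ s, (if σ i = none then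
      ∑ β : Bool, (if Function.update σ i (some β) = τ
        then ((-1 : ℤ) ^ σ.below i * sgn β) else 0) else 0)
    = if (τ i ≠ none ∧ Function.update τ i none ∈ s)
        then ((-1 : ℤ) ^ τ.below i * sg (τ i)) else 0 := by
  by_cases hc : τ i ≠ none ∧ Function.update τ i none ∈ s
  · obtain ⟨δ, hδ⟩ := Option.ne_none_iff_exists'.mp hc.1
    rw [if_pos hc]
    rw [Finset.sum_eq_single_of_mem (Function.update τ i none) hc.2]
    · rw [if_pos (Function.update_self i none τ)]
      have hupd : ∀ β : Bool,
          Function.update (Function.update τ i none) i (some β) = Function.update τ i (some β) :=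
        fun β => Function.update_idem ..
      have hbel : Cell.below (Function.update τ i none) i = τ.below i :=
        below_update_of_le none (le_refl i)
      rw [Fintype.sum_bool]
      have heq : ∀ β : Bool, (Function.update τ i (some β) = τ ↔ β = δ) := by
        intro β
        constructor
        · intro hh
          have := congrFun hh i
          rw [Function.update_self, hδ] at this
          exact (Option.some_inj.mp this)
        · rintro rfl
          rw [← hδ]; exact Function.update_eq_self i τ
      cases δ
      · rw [hupd true, hupd false]
        rw [if_neg (by simp [heq]), if_pos ((heq false).mpr rfl)]
        simp [hδ, sg, hbel]
      · rw [hupd true, hupd false]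
        rw [if_pos ((heq true).mpr rfl), if_neg (by simp [heq])]
        simp [hδ, sg, hbel]
    · intro σ hσ hne
      by_cases hσi : σ i = none
      · rw [if_pos hσi]
        apply Finset.sum_eq_zero
        intro β _
        rw [if_neg]
        intro hh
        exact hne (eq_update_of_update_eq hσi hh).1
      · rw [if_neg hσi]
  · rw [if_neg hc]
    apply Finset.sum_eq_zero
    intro σ hσ
    by_cases hσi : σ i = none
    · rw [if_pos hσi]
      apply Finset.sum_eq_zero
      intro β _
      rw [if_neg]
      intro hh
      obtain ⟨h1, h2⟩ := eq_update_of_update_eq hσi hh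
      exact hc ⟨by simp [h2], h1 ▸ hσ⟩
    · rw [if_neg hσi]

end Aux3

section Aux4

variable {n : ℕ}

lemma combin (ρ : Cell n) (α : Bool) (q : ℕ) (h : q + 1 ≤ ρ.dim) (τ : Cell n) :
    ∑ i : Fin n, (if (τ i ≠ none ∧ Function.update τ i none ∈ ES ρ α (q + 1))
        then ((-1 : ℤ) ^ τ.below i * sg (τ i)) else 0)
    = sgn α * ((if τ ∈ ES ρ α q then 1 else 0) - (if τ ∈ ES ρ (!α) q then 1 else 0)) := by
  by_cases h₀ : ∀ j : Fin n, ρ j ≠ none → τ j = ρ j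
  · by_cases hdim : τ.dim = q
    · -- main case
      set J : Finset (Fin n) := Finset.univ.filter (fun j => ρ j = none ∧ τ j ≠ none) with hJdef
      have hJmem : ∀ j : Fin n, j ∈ J ↔ (ρ j = none ∧ τ j ≠ none) := by
        intro j; simp [hJdef]
      set g : Fin n → Bool := fun j => decide (τ j = some (twist α (τ.below j))) with hgdef
      have hJne : J.Nonempty := by
        rw [Finset.nonempty_iff_ne_empty]
        intro hemp
        have hsub : (Finset.univ.filter fun j => ρ j = none)
            ⊆ (Finset.univ.filter fun j => τ j = none) := by
          intro j hj
          have hρj : ρ j = none := (Finset.mem_filter.mp hj).2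
          have : j ∉ J := by rw [hemp]; exact Finset.notMem_empty j
          rw [hJmem] at this
          push_neg at this
          exact Finset.mem_filter.mpr ⟨Finset.mem_univ j, this hρj⟩
        have := Finset.card_le_card hsub
        change ρ.dim ≤ τ.dim at this
        omega
      have key : ∀ i : Fin n,
          (τ i ≠ none ∧ Function.update τ i none ∈ ES ρ α (q + 1)) ↔
          (i ∈ J ∧ ((∀ j ∈ J, j < i → g j = true) ∧ (∀ j ∈ J, i < j → g j = false))) := by
        intro i
        constructor
        · rintro ⟨hne, hmem⟩
          obtain ⟨⟨hag, htw⟩, hdimu⟩ := mem_ES.mp hmem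
          have hρi : ρ i = none := by
            by_contra hri
            have := hag i hri
            rw [Function.update_self] at this
            exact hri this.symm
          refine ⟨(hJmem i).mpr ⟨hρi, hne⟩, fun j hj hji => ?_, fun j hj hij => ?_⟩
          · obtain ⟨hρj, hτj⟩ := (hJmem j).mp hj
            obtain ⟨δ, hδ⟩ := Option.ne_none_iff_exists'.mp hτj
            have hji' : j ≠ i := ne_of_lt hji
            have hu : Function.update τ i none j = some δ := by
              rw [Function.update_of_ne hji']; exact hδ
            have := htw j δ hρj hu
            rw [below_update_of_le none (le_of_lt hji)] at this
            simp [hgdef, hδ, this]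
          · obtain ⟨hρj, hτj⟩ := (hJmem j).mp hj
            obtain ⟨δ, hδ⟩ := Option.ne_none_iff_exists'.mp hτj
            have hji' : j ≠ i := (ne_of_lt hij).symm
            have hu : Function.update τ i none j = some δ := by
              rw [Function.update_of_ne hji']; exact hδ
            have := htw j δ hρj hu
            rw [below_update_none_of_gt hne hij, twist_succ] at this
            simp only [hgdef, hδ, decide_eq_false_iff_not]
            intro hcon
            rw [Option.some_inj.mp hcon] at this
            simp at this
        · rintro ⟨hiJ, h1, h2⟩
          obtain ⟨hρi, hne⟩ := (hJmem i).mp hiJ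
          refine ⟨hne, mem_ES.mpr ⟨⟨?_, ?_⟩, ?_⟩⟩
          · intro j hj
            have hji : j ≠ i := fun e => hj (e ▸ hρi)
            rw [Function.update_of_ne hji]
            exact h₀ j hj
          · intro j β hρj hupd
            have hji : j ≠ i := by
              intro e
              rw [e, Function.update_self] at hupd
              cases hupd
            rw [Function.update_of_ne hji] at hupd
            have hjJ : j ∈ J := (hJmem j).mpr ⟨hρj, by simp [hupd]⟩
            rcases lt_trichotomy j i with hlt | heq | hgt
            · have hg := h1 j hjJ hlt
              simp only [hgdef, decide_eq_true_eq] at hg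
              rw [hupd] at hg
              rw [below_update_of_le none (le_of_lt hlt)]
              exact Option.some_inj.mp hg
            · exact absurd heq hji
            · have hg := h2 j hjJ hgt
              simp only [hgdef, decide_eq_false_iff_not] at hg
              rw [below_update_none_of_gt hne hgt, twist_succ]
              rcases Bool.eq_false_or_eq_true (twist α (τ.below j)) with ht | ht <;>
                rcases Bool.eq_false_or_eq_true β with hβ | hβ <;>
                  simp_all [hupd]
          · rw [dim_update_none hne, hdim]
      have hvalset : (Finset.univ.filter fun i : Fin n =>
            (τ i ≠ none ∧ Function.update τ i none ∈ ES ρ α (q + 1)))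
          = J.filter (fun i => (∀ j ∈ J, j < i → g j = true) ∧ (∀ j ∈ J, i < j → g j = false)) := by
        ext i
        rw [Finset.mem_filter, Finset.mem_filter]
        constructor
        · rintro ⟨-, hp⟩
          exact (key i).mp hp
        · rintro ⟨hiJ, hc⟩
          exact ⟨Finset.mem_univ i, (key i).mpr ⟨hiJ, hc⟩⟩
      have hsq : ∀ m : ℕ, ((-1 : ℤ)) ^ m * ((-1 : ℤ)) ^ m = 1 := by
        intro m
        rw [← pow_add]
        exact Even.neg_one_pow ⟨m, rfl⟩
      calc
        ∑ i : Fin n, (if (τ i ≠ none ∧ Function.update τ i none ∈ ES ρ α (q + 1))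
            then ((-1 : ℤ) ^ τ.below i * sg (τ i)) else 0)
            = ∑ i ∈ Finset.univ.filter (fun i : Fin n =>
                (τ i ≠ none ∧ Function.update τ i none ∈ ES ρ α (q + 1))),
                ((-1 : ℤ) ^ τ.below i * sg (τ i)) := by
              rw [Finset.sum_filter]
        _ = ∑ i ∈ J.filter (fun i => (∀ j ∈ J, j < i → g j = true) ∧
              (∀ j ∈ J, i < j → g j = false)), ((-1 : ℤ) ^ τ.below i * sg (τ i)) := by
              rw [hvalset]
        _ = ∑ i ∈ J.filter (fun i => (∀ j ∈ J, j < i → g j = true) ∧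
              (∀ j ∈ J, i < j → g j = false)), sgn α * (if g i then (1 : ℤ) else -1) := by
              apply Finset.sum_congr rfl
              intro i hi
              have hiJ : i ∈ J := Finset.mem_filter.mp hi |>.1
              obtain ⟨hρi, hne⟩ := (hJmem i).mp hiJ
              obtain ⟨δ, hδ⟩ := Option.ne_none_iff_exists'.mp hne
              rw [hδ]
              show (-1 : ℤ) ^ τ.below i * sgn δ = _
              rcases Bool.eq_false_or_eq_true (g i) with hg | hg
              · rw [hg, if_pos rfl]
                simp only [hgdef, decide_eq_true_eq, hδ] at hg
                rw [Option.some_inj.mp hg, sgn_twist, ← mul_assoc, hsq, one_mul, mul_one]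
              · rw [hg, if_neg (by simp)]
                simp only [hgdef, decide_eq_false_iff_not, hδ] at hg
                have hδval : δ = !(twist α (τ.below i)) := by
                  rcases Bool.eq_false_or_eq_true (twist α (τ.below i)) with ht | ht <;>
                    rcases Bool.eq_false_or_eq_true δ with hβ | hβ <;>
                      simp_all
                rw [hδval, sgn_not, sgn_twist, mul_neg, ← mul_assoc, hsq, one_mul]
                ring
        _ = sgn α * ∑ i ∈ J.filter (fun i => (∀ j ∈ J, j < i → g j = true) ∧
              (∀ j ∈ J, i < j → g j = false)), (if g i then (1 : ℤ) else -1) := by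
              rw [Finset.mul_sum]
        _ = sgn α * ((if ∀ j ∈ J, g j = true then 1 else 0) -
              (if ∀ j ∈ J, g j = false then 1 else 0)) := by
              congr 1
              convert core J hJne g using 2 <;> congr
        _ = sgn α * ((if τ ∈ ES ρ α q then 1 else 0) - (if τ ∈ ES ρ (!α) q then 1 else 0)) := by
              congr 2
              · congr 1
                apply propext
                constructor
                · intro hall
                  rw [mem_ES]
                  refine ⟨⟨h₀, ?_⟩, hdim⟩
                  intro j β hρj hτj
                  have hjJ : j ∈ J := (hJmem j).mpr ⟨hρj, by simp [hτj]⟩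
                  have := hall j hjJ
                  simp only [hgdef, decide_eq_true_eq, hτj] at this
                  exact Option.some_inj.mp this
                · intro hmem j hjJ
                  obtain ⟨⟨-, htw⟩, -⟩ := mem_ES.mp hmem
                  obtain ⟨hρj, hτj⟩ := (hJmem j).mp hjJ
                  obtain ⟨δ, hδ⟩ := Option.ne_none_iff_exists'.mp hτj
                  have := htw j δ hρj hδ
                  simp [hgdef, hδ, this]
              · congr 1
                apply propext
                constructor
                · intro hall
                  rw [mem_ES]
                  refine ⟨⟨h₀, ?_⟩, hdim⟩
                  intro j β hρj hτj
                  have hjJ : j ∈ J := (hJmem j).mpr ⟨hρj, by simp [hτj]⟩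
                  have := hall j hjJ
                  simp only [hgdef, decide_eq_false_iff_not, hτj] at this
                  rw [twist_not]
                  rcases Bool.eq_false_or_eq_true (twist α (τ.below j)) with ht | ht <;>
                    rcases Bool.eq_false_or_eq_true β with hβ | hβ <;>
                      simp_all
                · intro hmem j hjJ
                  obtain ⟨⟨-, htw⟩, -⟩ := mem_ES.mp hmem
                  obtain ⟨hρj, hτj⟩ := (hJmem j).mp hjJ
                  obtain ⟨δ, hδ⟩ := Option.ne_none_iff_exists'.mp hτj
                  have := htw j δ hρj hδ
                  rw [twist_not] at this
                  simp only [hgdef, decide_eq_false_iff_not, hδ]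
                  intro hcon
                  rw [Option.some_inj.mp hcon] at this
                  simp at this
    · -- dimension mismatch : both sides zero
      have hL : ∀ i : Fin n,
          ¬ (τ i ≠ none ∧ Function.update τ i none ∈ ES ρ α (q + 1)) := by
        rintro i ⟨hne, hmem⟩
        obtain ⟨-, hdimu⟩ := mem_ES.mp hmem
        rw [dim_update_none hne] at hdimu
        omega
      rw [Finset.sum_eq_zero (fun i _ => if_neg (hL i)),
        if_neg (fun hmem => hdim (mem_ES.mp hmem).2),
        if_neg (fun hmem => hdim (mem_ES.mp hmem).2)]
      ring
  · -- agreement fails : both sides zero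
    have hL : ∀ i : Fin n,
        ¬ (τ i ≠ none ∧ Function.update τ i none ∈ ES ρ α (q + 1)) := by
      rintro i ⟨hne, hmem⟩
      obtain ⟨⟨hag, -⟩, -⟩ := mem_ES.mp hmem
      apply h₀
      have hρi : ρ i = none := by
        by_contra hri
        have := hag i hri
        rw [Function.update_self] at this
        exact hri this.symm
      intro j hj
      have hji : j ≠ i := fun e => hj (e ▸ hρi)
      have := hag j hj
      rwa [Function.update_of_ne hji] at this
    rw [Finset.sum_eq_zero (fun i _ => if_neg (hL i)),
      if_neg (fun hmem => h₀ (mem_ES.mp hmem).1.1),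
      if_neg (fun hmem => h₀ (mem_ES.mp hmem).1.1)]
    ring

lemma bd_S (ρ : Cell n) (α : Bool) (q : ℕ) (h : q + 1 ≤ ρ.dim) :
    bd (S ρ α (q + 1)) = sgn α • (S ρ α q - S ρ (!α) q) := by
  apply Finsupp.ext
  intro τ
  have hA : bd (S ρ α (q + 1)) = ∑ σ ∈ ES ρ α (q + 1), bdCell σ := by
    rw [S, bd_sum_single]
  rw [hA, Finset.sum_apply']
  have hB : ∀ σ ∈ ES ρ α (q + 1), bdCell σ τ = ∑ i : Fin n, (if σ i = none then
      ∑ β : Bool, (if Function.update σ i (some β) = τ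
        then ((-1 : ℤ) ^ σ.below i * sgn β) else 0) else 0) :=
    fun σ _ => bdCell_apply σ τ
  rw [Finset.sum_congr rfl hB, Finset.sum_comm]
  have hC : ∀ i : Fin n, (∑ σ ∈ ES ρ α (q + 1), (if σ i = none then
      ∑ β : Bool, (if Function.update σ i (some β) = τ
        then ((-1 : ℤ) ^ σ.below i * sgn β) else 0) else 0))
      = if (τ i ≠ none ∧ Function.update τ i none ∈ ES ρ α (q + 1))
          then ((-1 : ℤ) ^ τ.below i * sg (τ i)) else 0 :=
    fun i => inner2 (ES ρ α (q + 1)) τ i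
  rw [Finset.sum_congr rfl (fun i _ => hC i), combin ρ α q h τ]
  rw [Finsupp.smul_apply, Finsupp.sub_apply, S_apply, S_apply, smul_eq_mul]

end Aux4

section Aux5

variable {n : ℕ}

lemma nones_subset_of_mem_ES {ρ σ : Cell n} {α : Bool} {q : ℕ} (h : σ ∈ ES ρ α q) :
    (Finset.univ.filter fun j => σ j = none) ⊆ (Finset.univ.filter fun j => ρ j = none) := by
  obtain ⟨⟨hag, -⟩, -⟩ := mem_ES.mp h
  intro j hj
  have hσj : σ j = none := (Finset.mem_filter.mp hj).2
  refine Finset.mem_filter.mpr ⟨Finset.mem_univ j, ?_⟩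
  by_contra hρj
  rw [hag j hρj] at hσj
  exact hρj hσj

lemma ES_eq_empty {ρ : Cell n} {α : Bool} {q : ℕ} (h : ρ.dim < q) : ES ρ α q = ∅ := by
  rw [Finset.eq_empty_iff_forall_notMem]
  intro σ hσ
  have := Finset.card_le_card (nones_subset_of_mem_ES hσ)
  have hd := (mem_ES.mp hσ).2
  change σ.dim ≤ ρ.dim at this
  omega

lemma ES_disj {ρ : Cell n} {α : Bool} {q : ℕ} (h : q < ρ.dim) {τ : Cell n}
    (h1 : τ ∈ ES ρ α q) (h2 : τ ∈ ES ρ (!α) q) : False := by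
  -- find a position in J
  obtain ⟨⟨hag1, htw1⟩, hd⟩ := mem_ES.mp h1
  obtain ⟨⟨-, htw2⟩, -⟩ := mem_ES.mp h2
  have hssub : (Finset.univ.filter fun j => ρ j = none)
      ⊆ (Finset.univ.filter fun j => τ j = none) → False := by
    intro hsub
    have := Finset.card_le_card hsub
    change ρ.dim ≤ τ.dim at this
    omega
  have : ∃ j : Fin n, ρ j = none ∧ τ j ≠ none := by
    by_contra hno
    push_neg at hno
    apply hssub
    intro j hj
    exact Finset.mem_filter.mpr ⟨Finset.mem_univ j,
      hno j (Finset.mem_filter.mp hj).2⟩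
  obtain ⟨j, hρj, hτj⟩ := this
  obtain ⟨δ, hδ⟩ := Option.ne_none_iff_exists'.mp hτj
  have e1 := htw1 j δ hρj hδ
  have e2 := htw2 j δ hρj hδ
  rw [twist_not] at e2
  rw [e1] at e2
  simp at e2

lemma posPart_S_sub (ρ : Cell n) (q : ℕ) (h : q < ρ.dim) :
    posPart (S ρ true q - S ρ false q) = S ρ true q := by
  apply Finsupp.ext
  intro τ
  unfold posPart
  rw [Finsupp.mapRange_apply, Finsupp.sub_apply, S_apply, S_apply]
  by_cases h1 : τ ∈ ES ρ true q
  · rw [if_pos h1, if_neg (fun h2 => ES_disj h h1 (by simpa using h2))]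
    norm_num
  · rw [if_neg h1]
    by_cases h2 : τ ∈ ES ρ false q <;> simp [h2]

lemma negPart_S_sub (ρ : Cell n) (q : ℕ) (h : q < ρ.dim) :
    negPart (S ρ true q - S ρ false q) = S ρ false q := by
  apply Finsupp.ext
  intro τ
  unfold negPart
  rw [Finsupp.mapRange_apply, Finsupp.sub_apply, S_apply, S_apply]
  by_cases h1 : τ ∈ ES ρ true q
  · rw [if_pos h1, if_neg (fun h2 => ES_disj h h1 (by simpa using h2))]
    norm_num
  · rw [if_neg h1]
    by_cases h2 : τ ∈ ES ρ false q <;> simp [h2]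

lemma S_dim_self (ρ : Cell n) (α : Bool) : S ρ α ρ.dim = Finsupp.single ρ 1 := by
  have hES : ES ρ α ρ.dim = {ρ} := by
    ext σ
    rw [mem_ES, Finset.mem_singleton]
    constructor
    · rintro ⟨⟨hag, -⟩, hd⟩
      have hsub : (Finset.univ.filter fun j => σ j = none)
          ⊆ (Finset.univ.filter fun j => ρ j = none) := by
        intro j hj
        have hσj : σ j = none := (Finset.mem_filter.mp hj).2
        refine Finset.mem_filter.mpr ⟨Finset.mem_univ j, ?_⟩
        by_contra hρj
        rw [hag j hρj] at hσj
        exact hρj hσj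
      have hseteq : (Finset.univ.filter fun j => σ j = none)
          = (Finset.univ.filter fun j => ρ j = none) :=
        Finset.eq_of_subset_of_card_le hsub (le_of_eq hd.symm)
      funext j
      by_cases hσj : σ j = none
      · have : j ∈ Finset.univ.filter fun j => ρ j = none := by
          rw [← hseteq]; exact Finset.mem_filter.mpr ⟨Finset.mem_univ j, hσj⟩
        rw [hσj, (Finset.mem_filter.mp this).2]
      · have hρj : ρ j ≠ none := by
          intro hρj
          have : j ∈ Finset.univ.filter fun j => σ j = none := by
            rw [hseteq]; exact Finset.mem_filter.mpr ⟨Finset.mem_univ j, hρj⟩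
          exact hσj (Finset.mem_filter.mp this).2
        exact hag j hρj
    · rintro rfl
      refine ⟨⟨fun j _ => rfl, fun j β hρj hσj => ?_⟩, rfl⟩
      · rw [hρj] at hσj; cases hσj
  rw [S, hES, Finset.sum_singleton]

lemma bdp_S (ρ : Cell n) (α : Bool) (q : ℕ) (h : q + 1 ≤ ρ.dim) :
    bdp α (S ρ α (q + 1)) = S ρ α q := by
  cases α
  · unfold bdp
    rw [if_neg (by simp), bd_S ρ false q h]
    rw [show sgn false = (-1 : ℤ) from rfl, Bool.not_false, neg_smul, one_smul, neg_sub]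
    exact negPart_S_sub ρ q (by omega)
  · unfold bdp
    rw [if_pos rfl, bd_S ρ true q h]
    rw [show sgn true = 1 from rfl, one_smul, show (!true) = false from rfl]
    exact posPart_S_sub ρ q (by omega)

lemma iterate_bdp (ρ : Cell n) (α : Bool) :
    ∀ d : ℕ, d ≤ ρ.dim → (bdp α)^[d] (Finsupp.single ρ 1) = S ρ α (ρ.dim - d) := by
  intro d
  induction d with
  | zero => intro _; rw [Function.iterate_zero_apply, Nat.sub_zero, S_dim_self]
  | succ d ih =>
    intro hd
    rw [Function.iterate_succ_apply', ih (by omega)]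
    have he : ρ.dim - d = (ρ.dim - (d + 1)) + 1 := by omega
    rw [he, bdp_S ρ α _ (by omega)]

lemma atom_eq_S (ρ : Cell n) (α : Bool) (q : ℕ) (h : q ≤ ρ.dim) :
    atom ρ α q = S ρ α q := by
  unfold atom
  rw [if_pos h, iterate_bdp ρ α (ρ.dim - q) (by omega)]
  congr 1
  omega

end Aux5

section Aux6

variable {n : ℕ}

/-- The image of a basis element under the projection chain map. -/
noncomputable def gmap (k : Fin n) (γ : Bool) (τ : Cell n) : Chain n :=
  if τ k = none then 0 else Finsupp.single (Function.update τ k (some γ)) 1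

/-- The projection chain map. -/
noncomputable def fmap (k : Fin n) (γ : Bool) : Chain n →ₗ[ℤ] Chain n :=
  Finsupp.lsum ℤ fun τ => LinearMap.toSpanSingleton ℤ (Chain n) (gmap k γ τ)

lemma fmap_single (k : Fin n) (γ : Bool) (τ : Cell n) (z : ℤ) :
    fmap k γ (Finsupp.single τ z) = z • gmap k γ τ := by
  rw [fmap, Finsupp.lsum_single, LinearMap.toSpanSingleton_apply]

lemma fmap_bdCell (k : Fin n) (γ : Bool) (τ : Cell n) :
    fmap k γ (bdCell τ) = bd (gmap k γ τ) := by
  rw [bdCell_eq, map_sum]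
  by_cases hk : τ k = none
  · rw [gmap, if_pos hk, bd_zero]
    apply Finset.sum_eq_zero
    intro i hi
    rw [map_sum]
    by_cases hik : i = k
    · rw [hik]
      rw [Fintype.sum_bool, map_smul, map_smul, fmap_single, fmap_single, one_smul, one_smul]
      have hg : ∀ β : Bool, gmap k γ (Function.update τ k (some β))
          = Finsupp.single (Function.update τ k (some γ)) 1 := by
        intro β
        rw [gmap, if_neg (by rw [Function.update_self]; exact Option.some_ne_none _),
          Function.update_idem]
      rw [hg true, hg false, show sgn true = (1 : ℤ) from rfl,
        show sgn false = (-1 : ℤ) from rfl, mul_one, mul_neg_one, neg_smul]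
      exact add_neg_cancel _
    · apply Finset.sum_eq_zero
      intro β _
      rw [map_smul, fmap_single, one_smul, gmap,
        if_pos (by rw [Function.update_of_ne (Ne.symm hik)]; exact hk), smul_zero]
  · rw [gmap, if_neg hk, bd_single, one_smul]
    conv_rhs => rw [bdCell_eq]
    rw [nones_update_some hk γ]
    apply Finset.sum_congr rfl
    intro i hi
    have hiτ : τ i = none := (Finset.mem_filter.mp hi).2
    have hik : i ≠ k := fun e => hk (e ▸ hiτ)
    rw [map_sum]
    apply Finset.sum_congr rfl
    intro β _
    rw [map_smul, fmap_single, one_smul, gmap,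
      if_neg (by rw [Function.update_of_ne (Ne.symm hik)]; exact hk),
      below_update_some hk γ i, Function.update_comm hik]

lemma fmap_bd (k : Fin n) (γ : Bool) (c : Chain n) :
    fmap k γ (bd c) = bd (fmap k γ c) := by
  induction c using Finsupp.induction_linear with
  | zero => simp only [bd_zero, map_zero]
  | add f g hf hg => rw [bd_add, map_add, map_add, bd_add, hf, hg]
  | single σ z =>
    rw [bd_single, map_smul, fmap_bdCell, fmap_single, bd_smul]

lemma kcell_apply (k : Fin n) (γ : Bool) (j : Fin n) :
    kcell k γ j = if j = k then some γ else none := by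
  unfold kcell un
  by_cases hj : j = k
  · subst hj; rw [Function.update_self, if_pos rfl]
  · rw [Function.update_of_ne hj, if_neg hj]

lemma dim_un : (un n).dim = n := by
  unfold un Cell.dim
  simp

lemma dim_kcell (k : Fin n) (γ : Bool) : (kcell k γ).dim = n - 1 := by
  unfold Cell.dim
  have : (Finset.univ.filter fun j => kcell k γ j = none) = Finset.univ.erase k := by
    ext j
    rw [Finset.mem_filter, Finset.mem_erase, kcell_apply]
    by_cases hj : j = k <;> simp [hj]
  rw [this, Finset.card_erase_of_mem (Finset.mem_univ k), Finset.card_univ, Fintype.card_fin]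

lemma fmap_S (k : Fin n) (γ : Bool) (α : Bool) (q : ℕ) :
    fmap k γ (S (un n) α q) = S (kcell k γ) α q := by
  rw [S, map_sum]
  have h1 : ∀ σ ∈ ES (un n) α q, fmap k γ (Finsupp.single σ (1 : ℤ))
      = if ¬ σ k = none then Finsupp.single (Function.update σ k (some γ)) (1 : ℤ) else 0 := by
    intro σ _
    rw [fmap_single, one_smul, gmap]
    by_cases h : σ k = none
    · rw [if_pos h, if_neg (by simp [h])]
    · rw [if_neg h, if_pos h]
  rw [Finset.sum_congr rfl h1, ← Finset.sum_filter]
  rw [S]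
  apply Finset.sum_nbij' (i := fun σ => Function.update σ k (some γ))
    (j := fun τ => Function.update τ k (some (twist α (Cell.below τ k))))
  · -- hi : maps into ES kcell
    intro σ hσ
    rw [Finset.mem_filter] at hσ
    obtain ⟨hσES, hσk⟩ := hσ
    obtain ⟨⟨hag, htw⟩, hdim⟩ := mem_ES.mp hσES
    rw [mem_ES]
    refine ⟨⟨?_, ?_⟩, ?_⟩
    · intro j hj
      have hjk : j = k := by
        by_contra hjk
        rw [kcell_apply, if_neg hjk] at hj
        exact hj rfl
      subst hjk
      rw [kcell_apply, if_pos rfl, Function.update_self]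
    · intro j β hkj hupd
      have hjk : j ≠ k := by
        intro e
        rw [e, kcell_apply, if_pos rfl] at hkj
        cases hkj
      rw [Function.update_of_ne hjk] at hupd
      rw [below_update_some hσk γ j]
      exact htw j β rfl hupd
    · rw [dim_update_some hσk γ, hdim]
  · -- hj : maps back
    intro τ hτ
    obtain ⟨⟨hag, htw⟩, hdim⟩ := mem_ES.mp hτ
    have hτk : τ k = some γ := by
      have := hag k (by rw [kcell_apply, if_pos rfl]; exact Option.some_ne_none _)
      rwa [kcell_apply, if_pos rfl] at this
    have hτk' : τ k ≠ none := by rw [hτk]; exact Option.some_ne_none _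
    rw [Finset.mem_filter, mem_ES]
    refine ⟨⟨⟨?_, ?_⟩, ?_⟩, ?_⟩
    · intro j hj
      exact absurd rfl hj
    · intro j β _ hupd
      by_cases hjk : j = k
      · subst hjk
        rw [Function.update_self] at hupd
        rw [below_update_of_le _ (le_refl j)]
        exact (Option.some_inj.mp hupd).symm
      · rw [Function.update_of_ne hjk] at hupd
        rw [below_update_some hτk' _ j]
        exact htw j β (by rw [kcell_apply, if_neg hjk]) hupd
    · rw [dim_update_some hτk' _, hdim]
    · rw [Function.update_self]
      exact Option.some_ne_none _
  · -- left inverse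
    intro σ hσ
    rw [Finset.mem_filter] at hσ
    obtain ⟨hσES, hσk⟩ := hσ
    obtain ⟨⟨hag, htw⟩, hdim⟩ := mem_ES.mp hσES
    obtain ⟨δ, hδ⟩ := Option.ne_none_iff_exists'.mp hσk
    have hδtw : δ = twist α (Cell.below σ k) := htw k δ rfl hδ
    rw [below_update_some hσk γ k, Function.update_idem, ← hδtw, ← hδ]
    exact Function.update_eq_self k σ
  · -- right inverse
    intro τ hτ
    obtain ⟨⟨hag, htw⟩, hdim⟩ := mem_ES.mp hτ
    have hτk : τ k = some γ := by
      have := hag k (by rw [kcell_apply, if_pos rfl]; exact Option.some_ne_none _)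
      rwa [kcell_apply, if_pos rfl] at this
    rw [Function.update_idem, ← hτk]
    exact Function.update_eq_self k τ
  · -- values
    intro σ hσ
    rfl

end Aux6

/-- for `1 ≤ k ≤ n` (here `k : Fin n` is the 0-indexed position) and a
sign `γ`, with `σ = u_{k−1} ⊗ ∂^γ u₁ ⊗ u_{n−k}`, there is a chain map `f : Iⁿ → Iⁿ`
with `f(x ⊗ u₁ ⊗ y) = 0` and `f(x ⊗ ∂^γ u₁ ⊗ y) = f(x ⊗ ∂^{−γ} u₁ ⊗ y)
= x ⊗ ∂^γ u₁ ⊗ y`, and this chain map satisfies `f ⟨u_n⟩_i^α = ⟨σ⟩_i^α` for all `i`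
and `α`. -/
theorem projection_chain_map_sends_top_atom_to_face_atom (n : ℕ) (k : Fin n) (γ : Bool) :
    ∃ f : Chain n →ₗ[ℤ] Chain n,
      (∀ c : Chain n, f (bd c) = bd (f c)) ∧
      (∀ τ : Cell n, τ k = none → f (Finsupp.single τ 1) = 0) ∧
      (∀ τ : Cell n, τ k ≠ none →
        f (Finsupp.single τ 1) = Finsupp.single (Function.update τ k (some γ)) 1) ∧
      (∀ (i : ℕ) (α : Bool), f (atom (un n) α i) = atom (kcell k γ) α i) := by
  refine ⟨fmap k γ, fun c => fmap_bd k γ c, ?_, ?_, ?_⟩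
  · intro τ hτ
    rw [fmap_single, one_smul, gmap, if_pos hτ]
  · intro τ hτ
    rw [fmap_single, one_smul, gmap, if_neg hτ]
  · intro i α
    have hn : 0 < n := k.pos
    by_cases hi : i ≤ (un n).dim
    · rw [atom_eq_S _ _ _ hi, fmap_S]
      by_cases hi2 : i ≤ (kcell k γ).dim
      · rw [atom_eq_S _ _ _ hi2]
      · unfold atom
        rw [if_neg hi2, S, ES_eq_empty (by omega), Finset.sum_empty]
    · unfold atom
      rw [if_neg hi, if_neg (by rw [dim_kcell]; rw [dim_un] at hi; omega), map_zero]

end CubicalNerve
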